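/- Every tournament on at least 4l + 4 vertices contains at least l + 1 transitive arcs. -/

import Mathlib

/-- An arc `(x, y)` is a *transitive arc* if there is a directed path from `x` to `y`
avoiding the arc `(x, y)` itself. -/
def IsTransArc {V : Type*} (A : V → V → Prop) (x y : V) : Prop :=
  A x y ∧ ∃ l : List V, l.Nodup ∧
    l.Chain' (fun a b => A a b ∧ ¬(a = x ∧ b = y)) ∧
    l.head? = some x ∧ l.getLast? = some y

/-- A tournament: a loopless digraph with exactly one arc between any two distinct vertices. -/
def IsTournament {V : Type*} (A : V → V → Prop) : Prop :=
  (∀ v, ¬ A v v) ∧ ∀ u v : V, u ≠ v → (A u v ↔ ¬ A v u)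

lemma transArc_of_triangle {V : Type*} {A : V → V → Prop} {x y z : V}
    (hxy : x ≠ y) (hyz : y ≠ z) (hxz : x ≠ z)
    (axy : A x y) (ayz : A y z) (axz : A x z) : IsTransArc A x z := by
  refine ⟨axz, [x, y, z], ?_, ?_, rfl, rfl⟩
  · simp [hxy, hyz, hxz]
  · simp only [List.Chain', List.isChain_cons_cons, List.isChain_singleton]
    exact ⟨⟨axy, fun h => hyz h.2⟩, ⟨ayz, fun h => hxy h.1.symm⟩, trivial⟩

/-- A cyclic triangle plus a fourth vertex gives a transitive triangle. -/
lemma cyc_aux {V : Type*} {A : V → V → Prop} (hT : IsTournament A) {a b c d : V}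
    (hab : a ≠ b) (hac : a ≠ c) (had : a ≠ d) (hbc : b ≠ c) (hbd : b ≠ d) (hcd : c ≠ d)
    (Aab : A a b) (Abc : A b c) (Aca : A c a) :
    ∃ x y z : V, x ≠ y ∧ y ≠ z ∧ x ≠ z ∧ x ∈ ({a, b, c, d} : Set V) ∧
      z ∈ ({a, b, c, d} : Set V) ∧ A x y ∧ A y z ∧ A x z := by
  have tot : ∀ u v : V, u ≠ v → A u v ∨ A v u := fun u v h => by
    by_cases hx : A u v
    · exact Or.inl hx
    · exact Or.inr ((hT.2 v u h.symm).mpr hx)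
  rcases tot d a had.symm with h1 | h1 <;> rcases tot d b hbd.symm with h2 | h2 <;>
    rcases tot d c hcd.symm with h3 | h3
  · exact ⟨d, a, b, had.symm, hab, hbd.symm, by simp, by simp, h1, Aab, h2⟩
  · exact ⟨c, d, a, hcd, had.symm, hac.symm, by simp, by simp, h3, h1, Aca⟩
  · exact ⟨b, d, c, hbd, hcd.symm, hbc, by simp, by simp, h2, h3, Abc⟩
  · exact ⟨c, d, a, hcd, had.symm, hac.symm, by simp, by simp, h3, h1, Aca⟩
  · exact ⟨a, d, b, had, hbd.symm, hab, by simp, by simp, h1, h2, Aab⟩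
  · exact ⟨a, d, b, had, hbd.symm, hab, by simp, by simp, h1, h2, Aab⟩
  · exact ⟨b, d, c, hbd, hcd.symm, hbc, by simp, by simp, h2, h3, Abc⟩
  · exact ⟨c, a, d, hac.symm, had, hcd, by simp, by simp, Aca, h1, h3⟩

/-- Among any four distinct vertices of a tournament there is a transitive triangle. -/
lemma exists_triangle {V : Type*} {A : V → V → Prop} (hT : IsTournament A) {a b c d : V}
    (hab : a ≠ b) (hac : a ≠ c) (had : a ≠ d) (hbc : b ≠ c) (hbd : b ≠ d) (hcd : c ≠ d) :
    ∃ x y z : V, x ≠ y ∧ y ≠ z ∧ x ≠ z ∧ x ∈ ({a, b, c, d} : Set V) ∧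
      z ∈ ({a, b, c, d} : Set V) ∧ A x y ∧ A y z ∧ A x z := by
  have tot : ∀ u v : V, u ≠ v → A u v ∨ A v u := fun u v h => by
    by_cases hx : A u v
    · exact Or.inl hx
    · exact Or.inr ((hT.2 v u h.symm).mpr hx)
  rcases tot a b hab with h1 | h1 <;> rcases tot b c hbc with h2 | h2 <;>
    rcases tot a c hac with h3 | h3
  · exact ⟨a, b, c, hab, hbc, hac, by simp, by simp, h1, h2, h3⟩
  · exact cyc_aux hT hab hac had hbc hbd hcd h1 h2 h3
  · exact ⟨a, c, b, hac, hbc.symm, hab, by simp, by simp, h3, h2, h1⟩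
  · exact ⟨c, a, b, hac.symm, hab, hbc.symm, by simp, by simp, h3, h1, h2⟩
  · exact ⟨b, a, c, hab.symm, hac, hbc, by simp, by simp, h1, h3, h2⟩
  · exact ⟨b, c, a, hbc, hac.symm, hab.symm, by simp, by simp, h2, h3, h1⟩
  · have := cyc_aux hT hac hab had hbc.symm hcd hbd h3 h2 h1
    obtain ⟨x, y, z, n1, n2, n3, m1, m2, e1, e2, e3⟩ := this
    refine ⟨x, y, z, n1, n2, n3, ?_, ?_, e1, e2, e3⟩ <;>
      · simp only [Set.mem_insert_iff, Set.mem_singleton_iff] at *; tauto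
  · exact ⟨c, b, a, hbc.symm, hab.symm, hac.symm, by simp, by simp, h2, h1, h3⟩

lemma exists_transArc_in {V : Type*} {A : V → V → Prop} (hT : IsTournament A) {a b c d : V}
    (hab : a ≠ b) (hac : a ≠ c) (had : a ≠ d) (hbc : b ≠ c) (hbd : b ≠ d) (hcd : c ≠ d) :
    ∃ x z : V, x ∈ ({a, b, c, d} : Set V) ∧ z ∈ ({a, b, c, d} : Set V) ∧ IsTransArc A x z := by
  obtain ⟨x, y, z, n1, n2, n3, m1, m2, e1, e2, e3⟩ :=
    exists_triangle hT hab hac had hbc hbd hcd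
  exact ⟨x, z, m1, m2, transArc_of_triangle n1 n2 n3 e1 e2 e3⟩

lemma exists_four {V : Type*} [DecidableEq V] (s : Finset V) (h : 4 ≤ s.card) :
    ∃ a b c d, a ∈ s ∧ b ∈ s ∧ c ∈ s ∧ d ∈ s ∧
      a ≠ b ∧ a ≠ c ∧ a ≠ d ∧ b ≠ c ∧ b ≠ d ∧ c ≠ d := by
  obtain ⟨a, ha⟩ := Finset.card_pos.mp (show 0 < s.card by omega)
  have h1 : 3 ≤ (s.erase a).card := by rw [Finset.card_erase_of_mem ha]; omega
  obtain ⟨b, hb⟩ := Finset.card_pos.mp (by omega : 0 < (s.erase a).card)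
  have h2 : 2 ≤ ((s.erase a).erase b).card := by
    rw [Finset.card_erase_of_mem hb]; omega
  obtain ⟨c, hc⟩ := Finset.card_pos.mp (by omega : 0 < ((s.erase a).erase b).card)
  have h3 : 1 ≤ (((s.erase a).erase b).erase c).card := by
    rw [Finset.card_erase_of_mem hc]; omega
  obtain ⟨d, hd⟩ := Finset.card_pos.mp (by omega : 0 < (((s.erase a).erase b).erase c).card)
  simp only [Finset.mem_erase] at hb hc hd
  exact ⟨a, b, c, d, ha, hb.2, hc.2.2, hd.2.2.2, (hb.1).symm, (hc.2.1).symm,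
    (hd.2.2.1).symm, (hc.1).symm, (hd.2.1).symm, (hd.1).symm⟩

lemma main_ind {V : Type*} [DecidableEq V] {A : V → V → Prop} (hT : IsTournament A) :
    ∀ (l : ℕ) (s : Finset V), 4 * l + 4 ≤ s.card →
      ∃ T : Finset (V × V), T.card = l + 1 ∧
        ∀ p ∈ T, p.1 ∈ s ∧ p.2 ∈ s ∧ IsTransArc A p.1 p.2 := by
  intro l
  induction l with
  | zero =>
    intro s hs
    obtain ⟨a, b, c, d, ha, hb, hc, hd, n1, n2, n3, n4, n5, n6⟩ := exists_four s (by omega)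
    obtain ⟨x, z, mx, mz, harc⟩ := exists_transArc_in hT n1 n2 n3 n4 n5 n6
    have hxs : x ∈ s := by
      rcases mx with h | h | h | h <;> subst h <;> assumption
    have hzs : z ∈ s := by
      rcases mz with h | h | h | h <;> subst h <;> assumption
    exact ⟨{(x, z)}, rfl, by simp [hxs, hzs, harc]⟩
  | succ l ih =>
    intro s hs
    obtain ⟨a, b, c, d, ha, hb, hc, hd, n1, n2, n3, n4, n5, n6⟩ := exists_four s (by omega)
    obtain ⟨x, z, mx, mz, harc⟩ := exists_transArc_in hT n1 n2 n3 n4 n5 n6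
    have hxs : x ∈ s := by
      rcases mx with h | h | h | h <;> subst h <;> assumption
    have hzs : z ∈ s := by
      rcases mz with h | h | h | h <;> subst h <;> assumption
    set s' : Finset V := s \ {a, b, c, d} with hs'
    have hsub : ({a, b, c, d} : Finset V) ⊆ s := by
      intro v hv
      simp only [Finset.mem_insert, Finset.mem_singleton] at hv
      rcases hv with h | h | h | h <;> subst h <;> assumption
    have hcard4 : ({a, b, c, d} : Finset V).card = 4 := by
      rw [show ({a,b,c,d} : Finset V) = insert a (insert b (insert c {d})) from rfl]
      rw [Finset.card_insert_of_notMem (by simp [n1, n2, n3]),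
        Finset.card_insert_of_notMem (by simp [n4, n5]),
        Finset.card_insert_of_notMem (by simp [n6])]
      simp
    have hcard' : 4 * l + 4 ≤ s'.card := by
      rw [hs', Finset.card_sdiff_of_subset hsub, hcard4]; omega
    obtain ⟨T, hTcard, hTmem⟩ := ih s' hcard'
    have hnotmem : (x, z) ∉ T := by
      intro hmem
      have := (hTmem _ hmem).1
      simp only [hs', Finset.mem_sdiff] at this
      apply this.2
      simp only [Finset.mem_insert, Finset.mem_singleton]
      simpa using mx
    refine ⟨insert (x, z) T, ?_, ?_⟩
    · rw [Finset.card_insert_of_notMem hnotmem, hTcard]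
    · intro p hp
      rcases Finset.mem_insert.mp hp with h | h
      · subst h; exact ⟨hxs, hzs, harc⟩
      · obtain ⟨h1, h2, h3⟩ := hTmem p h
        rw [hs'] at h1 h2
        exact ⟨(Finset.mem_sdiff.mp h1).1, (Finset.mem_sdiff.mp h2).1, h3⟩

/-- Every tournament on at least 4ℓ + 4 vertices contains at least ℓ + 1 transitive arcs. -/
theorem tournament_many_transitive_arcs
    {V : Type*} [Fintype V] (A : V → V → Prop) (hT : IsTournament A)
    (l : ℕ) (h : 4 * l + 4 ≤ Fintype.card V) :
    l + 1 ≤ {p : V × V | IsTransArc A p.1 p.2}.ncard := by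
  classical
  obtain ⟨T, hTcard, hTmem⟩ := main_ind hT l Finset.univ (by simpa using h)
  have hsub : (T : Set (V × V)) ⊆ {p : V × V | IsTransArc A p.1 p.2} := by
    intro p hp
    exact (hTmem p hp).2.2
  calc l + 1 = (T : Set (V × V)).ncard := by rw [Set.ncard_coe_finset, hTcard]
    _ ≤ _ := Set.ncard_le_ncard hsub (Set.toFinite _)
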